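/- Define the test formula |U| ≥ n as ⊤ −⊛ (|h| ≥ n), where φ₁ −⊛ φ₂ (septraction) holds in (U,s,h) iff there exists a heap h' disjoint from h such that (U,s,h') ⊨ φ₁ and (U,s,h⊎h') ⊨ φ₂. Then for every SL-structure (U, s, h) and every n ∈ ℕ, (U, s, h) ⊨ |U| ≥ n if and only if |U| ≥ n (the cardinality of the universe U is at least n). -/

import Mathlib

/-- Domain of a heap: locations where the heap is defined. -/
def hdom {U : Type*} {k : ℕ} (h : U → Option (Fin k → U)) : Set U := {u | (h u).isSome}

/-- Two heaps are disjoint iff their domains are disjoint. -/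
def hdisj {U : Type*} {k : ℕ} (h₁ h₂ : U → Option (Fin k → U)) : Prop :=
  ∀ u, h₁ u = none ∨ h₂ u = none

/-- Union of (disjoint) heaps. -/
def hunion {U : Type*} {k : ℕ} (h₁ h₂ : U → Option (Fin k → U)) :
    U → Option (Fin k → U) :=
  fun u => (h₁ u).elim (h₂ u) some

lemma hdom_hunion {U : Type*} {k : ℕ} (h₁ h₂ : U → Option (Fin k → U)) :
    hdom (hunion h₁ h₂) = hdom h₁ ∪ hdom h₂ := by
  ext u
  simp only [hdom, hunion, Set.mem_setOf_eq, Set.mem_union]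
  cases h₁ u <;> simp [Option.elim]

/-- `|U| ≥ n ≝ ⊤ −⊛ (|h| ≥ n)` holds in `(U,s,h)` iff the
cardinality of the universe `U` is at least `n`.  The septraction
`⊤ −⊛ (|h| ≥ n)` holds iff there is a heap `h'` disjoint from `h` (satisfying
`⊤`) such that `h ⊎ h'` satisfies `|h| ≥ n`, i.e. `|dom(h ⊎ h')| ≥ n`. -/
theorem stmt3 {U : Type*} [Nonempty U] {k : ℕ} (hk : 1 ≤ k)
    (h : U → Option (Fin k → U)) (hfin : (hdom h).Finite) (n : ℕ) :
    (∃ h' : U → Option (Fin k → U),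
        (hdom h').Finite ∧ hdisj h h' ∧ n ≤ (hdom (hunion h h')).ncard)
    ↔ (n : Cardinal) ≤ Cardinal.mk U := by
  constructor
  · rintro ⟨h', hfin', _, hn⟩
    have hfinU : (hdom (hunion h h')).Finite := by
      rw [hdom_hunion]; exact hfin.union hfin'
    have hmk : Cardinal.mk (hdom (hunion h h')) = ((hdom (hunion h h')).ncard : Cardinal) := by
      haveI := hfinU.fintype
      simp only [Cardinal.mk_fintype, Set.ncard_eq_toFinset_card', Set.toFinset_card]
    calc (n : Cardinal) ≤ ((hdom (hunion h h')).ncard : Cardinal) := by exact_mod_cast hn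
      _ = Cardinal.mk (hdom (hunion h h')) := hmk.symm
      _ ≤ Cardinal.mk U := Cardinal.mk_set_le _
  · intro hle
    obtain ⟨S, hS⟩ := Cardinal.le_mk_iff_exists_set.mp hle
    have hSfin : S.Finite := by
      rw [← Set.finite_coe_iff, ← Cardinal.lt_aleph0_iff_finite, hS]
      exact Cardinal.nat_lt_aleph0 n
    have hScard : S.ncard = n := by
      obtain ⟨t, ht, htc⟩ := Cardinal.mk_set_eq_nat_iff_finset.mp hS
      rw [← ht, Set.ncard_coe_finset, htc]
    classical
    set h' : U → Option (Fin k → U) := fun u =>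
      if u ∈ S ∧ h u = none then some (fun _ => Classical.arbitrary U) else none with hh'
    have hdsub : hdom h' ⊆ S := by
      intro u hu
      simp only [hdom, hh', Set.mem_setOf_eq] at hu
      by_contra hus
      simp [hus] at hu
    refine ⟨h', hSfin.subset hdsub, ?_, ?_⟩
    · intro u
      by_cases hu : h u = none
      · exact Or.inl hu
      · right; simp [hh', hu]
    · rw [hdom_hunion]
      have hsub : S ⊆ hdom h ∪ hdom h' := by
        intro u hu
        by_cases hnone : h u = none
        · right; simp [hdom, hh', hu, hnone]
        · left; simpa [hdom, Option.isSome_iff_ne_none] using hnone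
      calc n = S.ncard := hScard.symm
        _ ≤ (hdom h ∪ hdom h').ncard :=
            Set.ncard_le_ncard hsub (hfin.union (hSfin.subset hdsub))
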